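/- (Theorem 2(vi), fluid model) Suppose T ≥ λ_a/μ_a + λ_b/μ_b. Set T_a := λ_a/μ_a and T_b := T_a + λ_b/μ_b. Define F_a(t) := min{1, μ_a t/λ_a} for t ∈ [0,T], and F_b(t) := 0 for t ∈ [0,T_a], F_b(t) := min{1, (μ_b/λ_b)(t − T_a)} for t ∈ [T_a,T]. Then F_a(T_a) = 1, F_b(T_b) = 1, λ_a F_a(t) + λ_b F_b(t) = μ_a t for all t ∈ [0,T_a], and λ_a F_a(t) + λ_b F_b(t) ≤ μ_b t for all t ∈ [0,T]. Consequently the belief-a queue is empty throughout the support of F_a and the belief-b queue is empty throughout [0,T], so (F_a,F_b) is a (degenerate) Nash equilibrium in which every customer expects zero delay and a queue is never formed. -/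

import Mathlib

/-- Extension of a cdf `F` defined on `[0,T]` to all of `ℝ`. -/
noncomputable def Fext (T : ℝ) (F : ℝ → ℝ) (t : ℝ) : ℝ :=
  if t < 0 then 0 else if t ≤ T then F t else F T

/-- Support of the Borel measure on `[0,T]` induced by the cdf `F`:
points every neighbourhood of which carries positive mass. -/
def fluidSupport (T : ℝ) (F : ℝ → ℝ) : Set ℝ :=
  {t | t ∈ Set.Icc 0 T ∧ ∀ ε > 0, Fext T F (t - ε) < Fext T F (t + ε)}

/-- Queue (cost) faced by a belief-`mu` customer arriving at time `t`:
`q_0 = (λ_a F_a(0) + λ_b F_b(0))/2` at the opening, and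
`q(t) = λ_a F_a(t) + λ_b F_b(t) - μ t` for `t > 0`. -/
noncomputable def cost (la lb mu : ℝ) (Fa Fb : ℝ → ℝ) (t : ℝ) : ℝ :=
  if t = 0 then (la * Fa 0 + lb * Fb 0) / 2
  else la * Fa t + lb * Fb t - mu * t

/-- Nash equilibrium of the fluid arrival game: on the support of its own arrival
distribution each type's queue is minimal over all times in `[0,T]`. -/
def IsFluidNash (la lb mua mub T : ℝ) (Fa Fb : ℝ → ℝ) : Prop :=
  (∀ t ∈ fluidSupport T Fa, ∀ s ∈ Set.Icc 0 T,
    cost la lb mua Fa Fb t ≤ cost la lb mua Fa Fb s) ∧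
  (∀ t ∈ fluidSupport T Fb, ∀ s ∈ Set.Icc 0 T,
    cost la lb mub Fa Fb t ≤ cost la lb mub Fa Fb s)


/-- Queue (cost) faced by a belief-`mu` customer at time `t`, accounting for the
possibility that the belief-`mu` queue is empty (waiting time zero) when the
cumulative input does not exceed the processed work. -/
noncomputable def costE (la lb mu : ℝ) (Fa Fb : ℝ → ℝ) (t : ℝ) : ℝ :=
  if t = 0 then (la * Fa 0 + lb * Fb 0) / 2
  else max 0 (la * Fa t + lb * Fb t - mu * t)

/-- Nash equilibrium of the fluid arrival game, with the cost accounting for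
emptiness of the believed queue. -/
def IsFluidNashE (la lb mua mub T : ℝ) (Fa Fb : ℝ → ℝ) : Prop :=
  (∀ t ∈ fluidSupport T Fa, ∀ s ∈ Set.Icc 0 T,
    costE la lb mua Fa Fb t ≤ costE la lb mua Fa Fb s) ∧
  (∀ t ∈ fluidSupport T Fb, ∀ s ∈ Set.Icc 0 T,
    costE la lb mub Fa Fb t ≤ costE la lb mub Fa Fb s)

/-- Theorem 2(vi) of the fluid model: if `T ≥ λ_a/μ_a + λ_b/μ_b`, the profile where
type `a` arrives uniformly at rate `μ_a/λ_a` on `[0,T_a]` and type `b` at rate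
`μ_b/λ_b` on `[T_a,T_b]` keeps both believed queues empty and is a (degenerate)
Nash equilibrium with zero delays. -/
theorem fluid_equilibrium_case_vi
    (la lb mua mub T Ta Tb : ℝ)
    (hla : 0 < la) (hlb : 0 < lb) (hmua : 0 < mua) (hmu : mua < mub)
    (hT : la / mua + lb / mub ≤ T)
    (hTa : Ta = la / mua) (hTb : Tb = Ta + lb / mub)
    (Fa Fb : ℝ → ℝ)
    (hFa : ∀ t ∈ Set.Icc (0:ℝ) T, Fa t = min 1 (mua * t / la))
    (hFb1 : ∀ t ∈ Set.Icc (0:ℝ) T, t ≤ Ta → Fb t = 0)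
    (hFb2 : ∀ t ∈ Set.Icc (0:ℝ) T, Ta ≤ t → Fb t = min 1 ((mub / lb) * (t - Ta))) :
    Fa Ta = 1 ∧ Fb Tb = 1 ∧
    (∀ t ∈ Set.Icc (0:ℝ) Ta, la * Fa t + lb * Fb t = mua * t) ∧
    (∀ t ∈ Set.Icc (0:ℝ) T, la * Fa t + lb * Fb t ≤ mub * t) ∧
    (∀ t ∈ fluidSupport T Fa, costE la lb mua Fa Fb t = 0) ∧
    (∀ t ∈ Set.Icc (0:ℝ) T, costE la lb mub Fa Fb t = 0) ∧
    IsFluidNashE la lb mua mub T Fa Fb := by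
  have hmub : 0 < mub := hmua.trans hmu
  have hTa0 : 0 ≤ Ta := by rw [hTa]; positivity
  have hlbmub : (0:ℝ) < lb / mub := div_pos hlb hmub
  have hTaT : Ta ≤ T := by rw [hTa]; linarith
  have hTbT : Tb ≤ T := by rw [hTb, hTa]; linarith
  have hTb0 : Ta ≤ Tb := by rw [hTb]; linarith
  have hT0 : 0 < T := by nlinarith [div_pos hla hmua]
  have hFa0 : Fa 0 = 0 := by
    rw [hFa 0 ⟨le_refl 0, hT0.le⟩]; norm_num
  have hFb0 : Fb 0 = 0 := hFb1 0 ⟨le_refl 0, hT0.le⟩ hTa0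
  have h1 : Fa Ta = 1 := by
    rw [hFa Ta ⟨hTa0, hTaT⟩, hTa]
    have : mua * (la / mua) / la = 1 := by field_simp
    rw [this, min_self]
  have h2 : Fb Tb = 1 := by
    rw [hFb2 Tb ⟨hTa0.trans hTb0, hTbT⟩ hTb0]
    have h : Tb - Ta = lb / mub := by rw [hTb]; ring
    rw [h]
    have : mub / lb * (lb / mub) = 1 := by field_simp
    rw [this, min_self]
  have h3 : ∀ t ∈ Set.Icc (0:ℝ) Ta, la * Fa t + lb * Fb t = mua * t := by
    intro t ht
    have htT : t ∈ Set.Icc (0:ℝ) T := ⟨ht.1, ht.2.trans hTaT⟩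
    rw [hFa t htT, hFb1 t htT ht.2]
    have hle : mua * t / la ≤ 1 := by
      rw [div_le_one hla]
      have h2' := ht.2
      rw [hTa, le_div_iff₀ hmua] at h2'
      linarith
    rw [min_eq_right hle]
    field_simp; ring
  have h4 : ∀ t ∈ Set.Icc (0:ℝ) T, la * Fa t + lb * Fb t ≤ mub * t := by
    intro t ht
    by_cases hc : t ≤ Ta
    · have := h3 t ⟨ht.1, hc⟩
      nlinarith [ht.1]
    · push_neg at hc
      rw [hFa t ht, hFb2 t ht hc.le]
      have h1' : (1:ℝ) ≤ mua * t / la := by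
        rw [le_div_iff₀ hla]
        have hc' := hc
        rw [hTa, div_lt_iff₀ hmua] at hc'
        nlinarith
      rw [min_eq_left h1']
      have hmin : min 1 (mub / lb * (t - Ta)) ≤ mub / lb * (t - Ta) := min_le_right _ _
      have hmul : lb * (mub / lb * (t - Ta)) = mub * (t - Ta) := by field_simp
      have hlaTa : la ≤ mub * Ta := by
        rw [hTa]
        rw [mul_div_assoc', le_div_iff₀ hmua]
        nlinarith
      nlinarith [mul_le_mul_of_nonneg_left hmin hlb.le]
  have hsuppA : ∀ t ∈ fluidSupport T Fa, t ≤ Ta := by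
    rintro t ⟨htIcc, hinc⟩
    by_contra hlt
    push_neg at hlt
    set ε := (t - Ta) / 2 with hε
    have hεpos : 0 < ε := by rw [hε]; linarith
    have h := hinc ε hεpos
    have htε0 : 0 ≤ t - ε := by rw [hε]; linarith
    have htεT : t - ε ≤ T := by linarith [htIcc.2]
    have hA : Fext T Fa (t - ε) = 1 := by
      rw [Fext, if_neg (not_lt.mpr htε0), if_pos htεT, hFa _ ⟨htε0, htεT⟩]
      have hge : (1:ℝ) ≤ mua * (t - ε) / la := by
        rw [le_div_iff₀ hla]
        have hTat : Ta ≤ t - ε := by rw [hε]; linarith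
        rw [hTa] at hTat
        rw [div_le_iff₀ hmua] at hTat
        nlinarith
      rw [min_eq_left hge]
    have hB : Fext T Fa (t + ε) ≤ 1 := by
      rw [Fext]
      split_ifs with h1' h2'
      · norm_num
      · rw [hFa _ ⟨by linarith, h2'⟩]; exact min_le_left _ _
      · rw [hFa T ⟨hT0.le, le_refl T⟩]; exact min_le_left _ _
    rw [hA] at h
    linarith
  have h5 : ∀ t ∈ fluidSupport T Fa, costE la lb mua Fa Fb t = 0 := by
    intro t hts
    have htTa := hsuppA t hts
    have ht0 := hts.1.1
    by_cases h0 : t = 0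
    · subst h0; simp [costE, hFa0, hFb0]
    · rw [costE, if_neg h0]
      have hsum := h3 t ⟨ht0, htTa⟩
      rw [hsum]
      simp
  have h6 : ∀ t ∈ Set.Icc (0:ℝ) T, costE la lb mub Fa Fb t = 0 := by
    intro t ht
    by_cases h0 : t = 0
    · subst h0; simp [costE, hFa0, hFb0]
    · rw [costE, if_neg h0]
      have := h4 t ht
      exact max_eq_left (by linarith)
  have hCE0 : ∀ mu s, 0 ≤ costE la lb mu Fa Fb s := by
    intro mu s
    by_cases h0 : s = 0
    · subst h0; simp [costE, hFa0, hFb0]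
    · rw [costE, if_neg h0]; exact le_max_left _ _
  refine ⟨h1, h2, h3, h4, h5, h6, ?_, ?_⟩
  · intro t hts s hs
    rw [h5 t hts]
    exact hCE0 mua s
  · intro t hts s hs
    rw [h6 t hts.1]
    exact hCE0 mub s
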